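/- Let A be an n×n real matrix with det A ≠ 0, and let α, β be permutations of Fin n such that T_α = sgn(α) · ∏_i A i (α i) and T_β = sgn(β) · ∏_i A i (β i) are both nonzero. Suppose that π = α⁻¹ ∘ β is a single cycle with support s and that the corresponding SR-graph cycle is both an e-cycle ((-1)^{|s|} · ∏_{i∈s} sign(A i (α i) · A i (β i)) = 1) and an s-cycle (∏_{i∈s} |A i (α i)| = ∏_{i∈s} |A i (β i)|). Then there exists a permutation σ of Fin n with ∏_i A i (σ i) ≠ 0 such that σ i ≠ α i for some i ∈ s, and σ i ≠ β i for some i ∈ s (i.e., the term subgraph of σ contains neither half of the disconnecting partition of the cycle). -/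

import Mathlib

open Finset Equiv

private lemma mySign_mul' (x y : ℝ) : Real.sign (x * y) = Real.sign x * Real.sign y := by
  rcases lt_trichotomy x 0 with hx | hx | hx
  · rcases lt_trichotomy y 0 with hy | hy | hy
    · rw [Real.sign_of_pos (mul_pos_of_neg_of_neg hx hy), Real.sign_of_neg hx,
        Real.sign_of_neg hy]; ring
    · simp [hy, Real.sign_zero]
    · rw [Real.sign_of_neg (mul_neg_of_neg_of_pos hx hy), Real.sign_of_neg hx,
        Real.sign_of_pos hy]; ring
  · simp [hx.symm ▸ (zero_mul y), Real.sign_zero, hx]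
  · rcases lt_trichotomy y 0 with hy | hy | hy
    · rw [Real.sign_of_neg (mul_neg_of_pos_of_neg hx hy), Real.sign_of_pos hx,
        Real.sign_of_neg hy]; ring
    · simp [hy, Real.sign_zero]
    · rw [Real.sign_of_pos (mul_pos hx hy), Real.sign_of_pos hx, Real.sign_of_pos hy]; ring

private lemma mySign_prod' {ι : Type*} (s : Finset ι) (f : ι → ℝ) :
    Real.sign (∏ i ∈ s, f i) = ∏ i ∈ s, Real.sign (f i) := by
  classical
  induction s using Finset.cons_induction with
  | empty => simp [Real.sign_one]
  | cons a s ha ih => rw [Finset.prod_cons, Finset.prod_cons, mySign_mul', ih]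



/-- Let `A` be an `n×n` real matrix with `det A ≠ 0`, and `α, β` permutations with
nonzero determinant terms `T_α = sgn(α)·∏ A i (α i)` and `T_β = sgn(β)·∏ A i (β i)`.
Suppose `π = α⁻¹ ∘ β` is a single cycle with support `s`, and the corresponding SR-graph
cycle is both an e-cycle (`(-1)^{|s|} · ∏_{i∈s} sign(A i (α i) · A i (β i)) = 1`) and an
s-cycle (`∏_{i∈s} |A i (α i)| = ∏_{i∈s} |A i (β i)|`). Then there exists a permutation
`σ` with `∏ i, A i (σ i) ≠ 0` such that `σ i ≠ α i` for some `i ∈ s` and `σ i ≠ β i` for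
some `i ∈ s` (its term subgraph contains neither half of the disconnecting partition). -/
theorem exists_term_avoiding_both_halves {n : ℕ} (A : Matrix (Fin n) (Fin n) ℝ)
    (hdet : A.det ≠ 0) (α β : Equiv.Perm (Fin n))
    (hα : ((Equiv.Perm.sign α : ℤ) : ℝ) * ∏ i, A i (α i) ≠ 0)
    (hβ : ((Equiv.Perm.sign β : ℤ) : ℝ) * ∏ i, A i (β i) ≠ 0)
    (hcyc : (α⁻¹ * β).IsCycle)
    (he : (-1 : ℝ) ^ (α⁻¹ * β).support.card *
      ∏ i ∈ (α⁻¹ * β).support, Real.sign (A i (α i) * A i (β i)) = 1)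
    (hs : ∏ i ∈ (α⁻¹ * β).support, |A i (α i)| =
      ∏ i ∈ (α⁻¹ * β).support, |A i (β i)|) :
    ∃ σ : Equiv.Perm (Fin n), (∏ i, A i (σ i)) ≠ 0 ∧
      (∃ i ∈ (α⁻¹ * β).support, σ i ≠ α i) ∧
      (∃ i ∈ (α⁻¹ * β).support, σ i ≠ β i) := by
  classical
  set π : Equiv.Perm (Fin n) := α⁻¹ * β with hπdef
  set s : Finset (Fin n) := π.support with hsdef
  by_contra hcon
  push_neg at hcon
  -- basic nonvanishing facts
  have hPα : (∏ i, A i (α i)) ≠ 0 := right_ne_zero_of_mul hα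
  have hPβ : (∏ i, A i (β i)) ≠ 0 := right_ne_zero_of_mul hβ
  have hAα : ∀ i, A i (α i) ≠ 0 := fun i =>
    Finset.prod_ne_zero_iff.mp hPα i (Finset.mem_univ i)
  have hAβ : ∀ i, A i (β i) ≠ 0 := fun i =>
    Finset.prod_ne_zero_iff.mp hPβ i (Finset.mem_univ i)
  set P : ℝ := ∏ i ∈ s, A i (α i) with hPdef
  set Q : ℝ := ∏ i ∈ s, A i (β i) with hQdef
  have hP : P ≠ 0 := Finset.prod_ne_zero_iff.mpr fun i _ => hAα i
  have hQ : Q ≠ 0 := Finset.prod_ne_zero_iff.mpr fun i _ => hAβ i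
  have hcc : ((-1 : ℝ)) ^ s.card * (-1 : ℝ) ^ s.card = 1 := by
    rw [← pow_add]
    exact Even.neg_one_pow ⟨s.card, rfl⟩
  -- the key sign computation
  have hsgnPQ : Real.sign (P * Q) = (-1 : ℝ) ^ s.card := by
    have h1 : (-1 : ℝ) ^ s.card * Real.sign (P * Q) = 1 := by
      rw [hPdef, hQdef, ← Finset.prod_mul_distrib, mySign_prod']
      exact he
    have h2 := congrArg (fun x => ((-1 : ℝ)) ^ s.card * x) h1
    simp only [← mul_assoc, hcc, one_mul, mul_one] at h2
    exact h2
  have habs : |P| = |Q| := by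
    rw [hPdef, hQdef, Finset.abs_prod, Finset.abs_prod]; exact hs
  have key : Q = (-1 : ℝ) ^ s.card * P := by
    rcases abs_eq_abs.mp habs with h | h
    · have : Real.sign (P * Q) = 1 := by
        rw [← h]; exact Real.sign_of_pos (mul_self_pos.mpr hP)
      rw [this.symm.trans hsgnPQ |>.symm] at *
      rw [← hsgnPQ, this, one_mul, h]
    · have hneg : P * Q = -(Q * Q) := by rw [h]; ring
      have : Real.sign (P * Q) = -1 := by
        rw [hneg]; exact Real.sign_of_neg (neg_lt_zero.mpr (mul_self_pos.mpr hQ))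
      have hc : ((-1 : ℝ)) ^ s.card = -1 := by rw [← hsgnPQ, this]
      rw [hc, h]; ring
  -- support facts
  have hπapply : ∀ i, π i = α⁻¹ (β i) := fun i => rfl
  have hαβ : ∀ i ∈ s, α i ≠ β i := by
    intro i hi h
    have : π i = i := by
      rw [hπapply, ← h]; exact α.symm_apply_apply i
    exact (Equiv.Perm.mem_support.mp hi) this
  have hc2 : 2 ≤ s.card := hcyc.two_le_card_support
  obtain ⟨i0, hi0⟩ : s.Nonempty := Finset.card_pos.mp (by omega)
  -- the two families
  set T : Equiv.Perm (Fin n) → ℝ :=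
    fun σ => ((Equiv.Perm.sign σ : ℤ) : ℝ) * ∏ i, A i (σ i) with hTdef
  set Sa : Finset (Equiv.Perm (Fin n)) :=
    Finset.univ.filter (fun σ => ∀ i ∈ s, σ i = α i) with hSadef
  set Sb : Finset (Equiv.Perm (Fin n)) :=
    Finset.univ.filter (fun σ => ∀ i ∈ s, σ i = β i) with hSbdef
  have hdisj : Disjoint Sa Sb := by
    rw [Finset.disjoint_left]
    intro σ hσa hσb
    have h1 := (Finset.mem_filter.mp hσa).2 i0 hi0
    have h2 := (Finset.mem_filter.mp hσb).2 i0 hi0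
    exact hαβ i0 hi0 (h1 ▸ h2 ▸ rfl)
  have hdet' : A.det = ∑ σ : Equiv.Perm (Fin n), T σ := by
    rw [← Matrix.det_transpose, Matrix.det_apply']
    simp [hTdef, Matrix.transpose_apply]
  have hsplit : (∑ σ : Equiv.Perm (Fin n), T σ) = ∑ σ ∈ Sa ∪ Sb, T σ := by
    refine (Finset.sum_subset (Finset.subset_univ _) ?_).symm
    intro σ _ hσ
    rw [Finset.mem_union, hSadef, hSbdef, Finset.mem_filter, Finset.mem_filter] at hσ
    push_neg at hσ
    obtain ⟨ha', hb'⟩ := hσ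
    by_cases hz : (∏ i, A i (σ i)) = 0
    · rw [hTdef]; simp [hz]
    · obtain ⟨i, hi, hne⟩ := ha' (Finset.mem_univ σ)
      exact absurd (hcon σ hz ⟨i, hi, hne⟩) (by
        obtain ⟨j, hj, hne'⟩ := hb' (Finset.mem_univ σ)
        intro h; exact hne' (h j hj))
  -- membership transfer under right multiplication by π
  have hmem : ∀ σ : Equiv.Perm (Fin n), σ ∈ Sa ↔ σ * π ∈ Sb := by
    intro σ
    simp only [hSadef, hSbdef, Finset.mem_filter, Finset.mem_univ, true_and]
    constructor
    · intro h i hi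
      have hπi : π i ∈ s := Equiv.Perm.apply_mem_support.mpr hi
      rw [Equiv.Perm.mul_apply, h (π i) hπi, hπapply]
      exact Equiv.apply_symm_apply α (β i)
    · intro h i hi
      have hπi : π⁻¹ i ∈ s := by
        rw [hsdef, ← Equiv.Perm.support_inv]; exact Equiv.Perm.apply_mem_support.mpr
          (by rw [Equiv.Perm.support_inv]; exact hi)
      have := h (π⁻¹ i) hπi
      rw [Equiv.Perm.mul_apply, show π (π⁻¹ i) = i from Equiv.apply_symm_apply π i] at this
      rw [this]
      have : π⁻¹ i = β⁻¹ (α i) := by rw [hπdef]; simp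
      rw [this]
      exact Equiv.apply_symm_apply β (α i)
  -- value computation
  have hval : ∀ σ ∈ Sa, T (σ * π) = - T σ := by
    intro σ hσ
    have hσs : ∀ i ∈ s, σ i = α i := (Finset.mem_filter.mp hσ).2
    have hsgn : ((Equiv.Perm.sign (σ * π) : ℤ) : ℝ) =
        ((Equiv.Perm.sign σ : ℤ) : ℝ) * (-(-1 : ℝ) ^ s.card) := by
      rw [Equiv.Perm.sign_mul, hcyc.sign]
      push_cast
      ring
    have hprod : (∏ i, A i ((σ * π) i)) =
        (-1 : ℝ) ^ s.card * ∏ i, A i (σ i) := by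
      rw [← Finset.prod_mul_prod_compl s (fun i => A i ((σ * π) i)),
        ← Finset.prod_mul_prod_compl s (fun i => A i (σ i))]
      have e1 : ∏ i ∈ s, A i ((σ * π) i) = Q := by
        refine Finset.prod_congr rfl fun i hi => ?_
        have hπi : π i ∈ s := Equiv.Perm.apply_mem_support.mpr hi
        rw [Equiv.Perm.mul_apply, hσs (π i) hπi, hπapply]
        rw [show α (α⁻¹ (β i)) = β i from Equiv.apply_symm_apply α (β i)]
      have e2 : ∏ i ∈ sᶜ, A i ((σ * π) i) = ∏ i ∈ sᶜ, A i (σ i) := by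
        refine Finset.prod_congr rfl fun i hi => ?_
        have : π i = i := Equiv.Perm.notMem_support.mp (Finset.mem_compl.mp hi)
        rw [Equiv.Perm.mul_apply, this]
      have e3 : ∏ i ∈ s, A i (σ i) = P := by
        refine Finset.prod_congr rfl fun i hi => ?_
        rw [hσs i hi]
      rw [e1, e2, e3, key]
      ring
    rw [hTdef]
    simp only
    rw [hsgn, hprod]
    have : ((Equiv.Perm.sign σ : ℤ) : ℝ) * (-(-1 : ℝ) ^ s.card) *
        ((-1 : ℝ) ^ s.card * ∏ i, A i (σ i)) =
        -(((Equiv.Perm.sign σ : ℤ) : ℝ) * ∏ i, A i (σ i)) *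
        ((-1 : ℝ) ^ s.card * (-1 : ℝ) ^ s.card) := by ring
    rw [this, hcc, mul_one]
  have hsumb : ∑ σ ∈ Sb, T σ = - ∑ σ ∈ Sa, T σ := by
    have : ∑ σ ∈ Sa, T (σ * π) = ∑ σ ∈ Sb, T σ :=
      Finset.sum_equiv (Equiv.mulRight π) (fun σ => hmem σ) (fun σ _ => rfl)
    rw [← this, ← Finset.sum_neg_distrib]
    exact Finset.sum_congr rfl hval
  have : A.det = 0 := by
    rw [hdet', hsplit, Finset.sum_union hdisj, hsumb]
    ring
  exact hdet this
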